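/- Let X be an n×p real matrix with columns x_1,…,x_p, let ξ > 0, λ₁ > 0, s ≥ 1, and 0 < c_* ≤ c*. Let Σ̂ be the thresholded Gram matrix Σ̂_{jk} = (x_j^T x_k/n)·1{|x_j^T x_k/n| ≥ λ₁}, and suppose its smallest eigenvalue is at least c_*, its largest eigenvalue is at most c*, and, with K = 2ξ²(c*/c_* + 1/2), both s λ₁ (1 + ξ)² ≤ c_*/2 and s λ₁ (1 + K) + λ₁ ≤ c_*/2 hold. Then for every S ⊆ {1,…,p} with 1 ≤ |S| ≤ s and m the smallest integer with m ≥ K|S|: the sparse eigenvalues satisfy φ₋(m,S) ≥ c_*/2 and φ₊(m,S) ≤ c* + c_*/2, and consequently ξ² φ₊(m,S) / κ²(ξ,S) ≤ K. -/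

import Mathlib

open Finset

/-- The compatibility factor `κ(ξ,S)` of a design matrix `X`. -/
noncomputable def compatFactor (n p : ℕ) (X : Matrix (Fin n) (Fin p) ℝ) (ξ : ℝ)
    (S : Finset (Fin p)) : ℝ :=
  sInf { r : ℝ | ∃ u : Fin p → ℝ,
    (∑ k ∈ Sᶜ, |u k|) ≤ ξ * (∑ k ∈ S, |u k|) ∧ (∑ k ∈ S, |u k|) ≠ 0 ∧
    r = Real.sqrt (∑ i, (∑ k, X i k * u k) ^ 2) * Real.sqrt S.card /
        (Real.sqrt n * ∑ k ∈ S, |u k|) }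

/-- The lower sparse eigenvalue `φ₋(m,S)`: the minimum over `B ⊇ S` with `|B∖S| ≤ m`
of the smallest eigenvalue of `X_Bᵀ X_B / n`, expressed via Rayleigh quotients. -/
noncomputable def phiMinus (n p : ℕ) (X : Matrix (Fin n) (Fin p) ℝ) (m : ℕ)
    (S : Finset (Fin p)) : ℝ :=
  sInf { r : ℝ | ∃ B : Finset (Fin p), S ⊆ B ∧ (B \ S).card ≤ m ∧
    ∃ u : Fin p → ℝ, (∀ k, k ∉ B → u k = 0) ∧ u ≠ 0 ∧
      r = (∑ i, (∑ k, X i k * u k) ^ 2) / (n * ∑ k, (u k) ^ 2) }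

/-- The upper sparse eigenvalue `φ₊(m,S)`: the maximum over `B` with `B ∩ S = ∅` and
`|B| ≤ m` of the largest eigenvalue of `X_Bᵀ X_B / n`, expressed via Rayleigh quotients. -/
noncomputable def phiPlus (n p : ℕ) (X : Matrix (Fin n) (Fin p) ℝ) (m : ℕ)
    (S : Finset (Fin p)) : ℝ :=
  sSup { r : ℝ | ∃ B : Finset (Fin p), Disjoint B S ∧ B.card ≤ m ∧
    ∃ u : Fin p → ℝ, (∀ k, k ∉ B → u k = 0) ∧ u ≠ 0 ∧
      r = (∑ i, (∑ k, X i k * u k) ^ 2) / (n * ∑ k, (u k) ^ 2) }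


lemma sefg_quad_id (n p : ℕ) (X : Matrix (Fin n) (Fin p) ℝ) (u : Fin p → ℝ) :
    ∑ i, (∑ k, X i k * u k) ^ 2 = ∑ j, ∑ k, u j * (∑ i, X i j * X i k) * u k := by
  simp_rw [sq, Finset.sum_mul, Finset.mul_sum]
  rw [Finset.sum_comm]
  refine Finset.sum_congr rfl fun j _ => ?_
  rw [Finset.sum_comm]
  refine Finset.sum_congr rfl fun k _ => ?_
  rw [Finset.sum_mul]
  exact Finset.sum_congr rfl fun i _ => by ring

lemma sefg_quad_id' (n p : ℕ) (hn : 0 < n) (X : Matrix (Fin n) (Fin p) ℝ) (u : Fin p → ℝ) :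
    ∑ i, (∑ k, X i k * u k) ^ 2
      = n * ∑ j, ∑ k, u j * ((∑ i, X i j * X i k) / n) * u k := by
  have hn' : (n : ℝ) ≠ 0 := Nat.cast_ne_zero.mpr hn.ne'
  rw [sefg_quad_id, Finset.mul_sum]
  refine Finset.sum_congr rfl fun j _ => ?_
  rw [Finset.mul_sum]
  refine Finset.sum_congr rfl fun k _ => ?_
  field_simp

lemma sefg_quad_close (n p : ℕ) (X : Matrix (Fin n) (Fin p) ℝ) (lam₁ : ℝ) (hlam₁ : 0 < lam₁)
    (Sighat : Matrix (Fin p) (Fin p) ℝ)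
    (hSighat : ∀ j k : Fin p, Sighat j k =
      if lam₁ ≤ |(∑ i, X i j * X i k) / n| then (∑ i, X i j * X i k) / n else 0)
    (u : Fin p → ℝ) :
    |(∑ j, ∑ k, u j * ((∑ i, X i j * X i k) / n) * u k)
        - ∑ j, ∑ k, u j * Sighat j k * u k| ≤ lam₁ * (∑ j, |u j|) ^ 2 := by
  have hentry : ∀ j k : Fin p, |(∑ i, X i j * X i k) / n - Sighat j k| ≤ lam₁ := by
    intro j k
    rw [hSighat j k]
    split_ifs with h
    · simpa using hlam₁.le
    · push_neg at h
      simpa using h.le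
  have h1 : |(∑ j, ∑ k, u j * ((∑ i, X i j * X i k) / n) * u k)
        - ∑ j, ∑ k, u j * Sighat j k * u k|
      ≤ ∑ j, ∑ k, |u j| * lam₁ * |u k| := by
    rw [← Finset.sum_sub_distrib]
    refine (Finset.abs_sum_le_sum_abs _ _).trans (Finset.sum_le_sum fun j _ => ?_)
    rw [← Finset.sum_sub_distrib]
    refine (Finset.abs_sum_le_sum_abs _ _).trans (Finset.sum_le_sum fun k _ => ?_)
    have : u j * ((∑ i, X i j * X i k) / n) * u k - u j * Sighat j k * u k
        = u j * ((∑ i, X i j * X i k) / n - Sighat j k) * u k := by ring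
    rw [this, abs_mul, abs_mul]
    have h3 : |u j| * |(∑ i, X i j * X i k) / n - Sighat j k| ≤ |u j| * lam₁ :=
      mul_le_mul_of_nonneg_left (hentry j k) (abs_nonneg _)
    exact mul_le_mul_of_nonneg_right h3 (abs_nonneg _)
  refine h1.trans ?_
  have : ∑ j, ∑ k, |u j| * lam₁ * |u k| = lam₁ * (∑ j, |u j|) ^ 2 := by
    simp_rw [← Finset.mul_sum, ← Finset.sum_mul]
    ring
  rw [this]

set_option maxHeartbeats 1600000 in
/-- sparse eigenvalue bounds via the thresholded Gram matrix
(second part of Proposition 2). -/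
theorem sparse_eigenvalues_from_thresholded_gram
    (n p : ℕ) (hn : 0 < n)
    (X : Matrix (Fin n) (Fin p) ℝ)
    (ξ lam₁ s cstar cupper : ℝ)
    (hξ : 0 < ξ) (hlam₁ : 0 < lam₁) (hs : 1 ≤ s) (hcstar : 0 < cstar) (hcc : cstar ≤ cupper)
    (Sighat : Matrix (Fin p) (Fin p) ℝ)
    (hSighat : ∀ j k : Fin p, Sighat j k =
      if lam₁ ≤ |(∑ i, X i j * X i k) / n| then (∑ i, X i j * X i k) / n else 0)
    (heigLower : ∀ u : Fin p → ℝ,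
      cstar * (∑ j, (u j) ^ 2) ≤ ∑ j, ∑ k, u j * Sighat j k * u k)
    (heigUpper : ∀ u : Fin p → ℝ,
      (∑ j, ∑ k, u j * Sighat j k * u k) ≤ cupper * ∑ j, (u j) ^ 2)
    (K : ℝ) (hK : K = 2 * ξ ^ 2 * (cupper / cstar + 1 / 2))
    (hcond₁ : s * lam₁ * (1 + ξ) ^ 2 ≤ cstar / 2)
    (hcond₂ : s * lam₁ * (1 + K) + lam₁ ≤ cstar / 2)
    (S : Finset (Fin p)) (hS : S.Nonempty) (hScard : (S.card : ℝ) ≤ s)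
    (m : ℕ) (hm : m = ⌈K * (S.card : ℝ)⌉₊) :
    cstar / 2 ≤ phiMinus n p X m S ∧
    phiPlus n p X m S ≤ cupper + cstar / 2 ∧
    ξ ^ 2 * phiPlus n p X m S / (compatFactor n p X ξ S) ^ 2 ≤ K := by
  have hn' : (n : ℝ) ≠ 0 := Nat.cast_ne_zero.mpr hn.ne'
  have hKpos : 0 < K := by
    rw [hK]
    have h1 : (1:ℝ) ≤ cupper / cstar := (one_le_div hcstar).mpr hcc
    nlinarith
  have hmK : (m : ℝ) ≤ K * S.card + 1 := by
    rw [hm]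
    exact (Nat.ceil_lt_add_one (by positivity)).le
  have hScard1 : (1:ℝ) ≤ (S.card : ℝ) := by
    have := Finset.card_pos.mpr hS
    exact_mod_cast this
  have hQlow : ∀ u : Fin p → ℝ,
      cstar * (∑ j, u j ^ 2) - lam₁ * (∑ j, |u j|) ^ 2
        ≤ ∑ j, ∑ k, u j * ((∑ i, X i j * X i k) / n) * u k := by
    intro u
    have h := sefg_quad_close n p X lam₁ hlam₁ Sighat hSighat u
    have h2 := heigLower u
    have h3 := (abs_le.mp h).1
    linarith
  have hQhigh : ∀ u : Fin p → ℝ,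
      (∑ j, ∑ k, u j * ((∑ i, X i j * X i k) / n) * u k)
        ≤ cupper * (∑ j, u j ^ 2) + lam₁ * (∑ j, |u j|) ^ 2 := by
    intro u
    have h := sefg_quad_close n p X lam₁ hlam₁ Sighat hSighat u
    have h2 := heigUpper u
    have h3 := (abs_le.mp h).2
    linarith
  -- Part 1 : lower sparse eigenvalue
  have part1 : cstar / 2 ≤ phiMinus n p X m S := by
    refine le_csInf ?_ ?_
    · obtain ⟨j₀, hj₀⟩ := hS
      refine ⟨_, ⟨S, Finset.Subset.refl S, by simp, fun k => if k = j₀ then 1 else 0,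
        fun k hk => if_neg (fun h => hk (by rw [h]; exact hj₀)), ?_, rfl⟩⟩
      intro h
      have := congrFun h j₀
      simp at this
    · rintro r ⟨B, hSB, hBS, u, hsupp, hune0, rfl⟩
      obtain ⟨j, hj⟩ := Function.ne_iff.mp hune0
      have hj' : u j ≠ 0 := by simpa using hj
      have hupos : 0 < ∑ j, u j ^ 2 :=
        Finset.sum_pos' (fun i _ => sq_nonneg _) ⟨j, Finset.mem_univ j, by positivity⟩
      have hsum_eq : ∑ j ∈ B, |u j| = ∑ j, |u j| :=
        Finset.sum_subset (Finset.subset_univ B) (fun x _ hx => by rw [hsupp x hx, abs_zero])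
      have hsq_eq : ∑ j ∈ B, u j ^ 2 = ∑ j, u j ^ 2 :=
        Finset.sum_subset (Finset.subset_univ B) (fun x _ hx => by rw [hsupp x hx]; ring)
      have hCS : (∑ j, |u j|) ^ 2 ≤ (B.card : ℝ) * ∑ j, u j ^ 2 := by
        rw [← hsum_eq, ← hsq_eq]
        have := sq_sum_le_card_mul_sum_sq (s := B) (f := fun j => |u j|)
        simpa [sq_abs] using this
      have hcard : (B.card : ℝ) ≤ (S.card : ℝ) + m := by
        have h1 : (B \ S).card + S.card = B.card := Finset.card_sdiff_add_card_eq_card hSB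
        have h2 : B.card ≤ S.card + m := by omega
        exact_mod_cast h2
      have hlamB : lam₁ * (B.card : ℝ) ≤ cstar / 2 := by
        have h4 : K * (S.card : ℝ) ≤ K * s := mul_le_mul_of_nonneg_left hScard hKpos.le
        have h3 : (B.card : ℝ) ≤ s + (K * s + 1) := by linarith
        have h5 : lam₁ * (B.card : ℝ) ≤ lam₁ * (s + (K * s + 1)) :=
          mul_le_mul_of_nonneg_left h3 hlam₁.le
        nlinarith [h5, hcond₂]
      have hQ := hQlow u
      have key : cstar / 2 * (∑ j, u j ^ 2)
          ≤ ∑ j, ∑ k, u j * ((∑ i, X i j * X i k) / n) * u k := by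
        nlinarith [hQ, hCS, mul_le_mul_of_nonneg_left hCS hlam₁.le,
          mul_le_mul_of_nonneg_right hlamB hupos.le]
      rw [sefg_quad_id' n p hn X u, mul_div_mul_left _ _ hn']
      exact (le_div_iff₀ hupos).mpr key
  -- Part 2 : upper sparse eigenvalue
  have part2 : phiPlus n p X m S ≤ cupper + cstar / 2 := by
    refine Real.sSup_le ?_ (by linarith)
    rintro r ⟨B, hBdisj, hBm, u, hsupp, hune0, rfl⟩
    obtain ⟨j, hj⟩ := Function.ne_iff.mp hune0
    have hj' : u j ≠ 0 := by simpa using hj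
    have hupos : 0 < ∑ j, u j ^ 2 :=
      Finset.sum_pos' (fun i _ => sq_nonneg _) ⟨j, Finset.mem_univ j, by positivity⟩
    have hsum_eq : ∑ j ∈ B, |u j| = ∑ j, |u j| :=
      Finset.sum_subset (Finset.subset_univ B) (fun x _ hx => by rw [hsupp x hx, abs_zero])
    have hsq_eq : ∑ j ∈ B, u j ^ 2 = ∑ j, u j ^ 2 :=
      Finset.sum_subset (Finset.subset_univ B) (fun x _ hx => by rw [hsupp x hx]; ring)
    have hCS : (∑ j, |u j|) ^ 2 ≤ (B.card : ℝ) * ∑ j, u j ^ 2 := by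
      rw [← hsum_eq, ← hsq_eq]
      have := sq_sum_le_card_mul_sum_sq (s := B) (f := fun j => |u j|)
      simpa [sq_abs] using this
    have hcard : (B.card : ℝ) ≤ (m : ℝ) := by exact_mod_cast hBm
    have hlamB : lam₁ * (B.card : ℝ) ≤ cstar / 2 := by
      have h4 : K * (S.card : ℝ) ≤ K * s := mul_le_mul_of_nonneg_left hScard hKpos.le
      have h3 : (B.card : ℝ) ≤ K * s + 1 := by linarith
      have h5 : lam₁ * (B.card : ℝ) ≤ lam₁ * (K * s + 1) :=
        mul_le_mul_of_nonneg_left h3 hlam₁.le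
      have h6 : 0 ≤ s * lam₁ := mul_nonneg (by linarith) hlam₁.le
      linarith [h5, h6, hcond₂]
    have hQ := hQhigh u
    have key : (∑ j, ∑ k, u j * ((∑ i, X i j * X i k) / n) * u k)
        ≤ (cupper + cstar / 2) * (∑ j, u j ^ 2) := by
      nlinarith [hQ, hCS, mul_le_mul_of_nonneg_left hCS hlam₁.le,
        mul_le_mul_of_nonneg_right hlamB hupos.le]
    rw [sefg_quad_id' n p hn X u, mul_div_mul_left _ _ hn']
    exact (div_le_iff₀ hupos).mpr key
  -- Part 3 : compatibility factor bound
  have hphiplus_nonneg : 0 ≤ phiPlus n p X m S := by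
    refine Real.sSup_nonneg ?_
    rintro r ⟨B, _, _, u, _, _, rfl⟩
    have h1 : (0:ℝ) ≤ ∑ i, (∑ k, X i k * u k) ^ 2 := Finset.sum_nonneg fun i _ => sq_nonneg _
    have h2 : (0:ℝ) ≤ (n:ℝ) * ∑ k, u k ^ 2 := by positivity
    exact div_nonneg h1 h2
  have hκ : Real.sqrt (cstar / 2) ≤ compatFactor n p X ξ S := by
    refine le_csInf ?_ ?_
    · refine ⟨_, ⟨fun k => if k ∈ S then 1 else 0, ?_, ?_, rfl⟩⟩
      · have h0 : ∑ k ∈ Sᶜ, |if k ∈ S then (1:ℝ) else 0| = 0 :=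
          Finset.sum_eq_zero fun k hk => by
            rw [if_neg (Finset.mem_compl.mp hk), abs_zero]
        rw [h0]
        have h1 : ∑ k ∈ S, |if k ∈ S then (1:ℝ) else 0| = S.card := by
          rw [Finset.sum_congr rfl fun k hk => by rw [if_pos hk, abs_one]]
          simp
        rw [h1]
        positivity
      · have h1 : ∑ k ∈ S, |if k ∈ S then (1:ℝ) else 0| = S.card := by
          rw [Finset.sum_congr rfl fun k hk => by rw [if_pos hk, abs_one]]
          simp
        rw [h1]
        positivity
    · rintro r ⟨u, hC, hLne, rfl⟩
      have hL0 : 0 < ∑ k ∈ S, |u k| :=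
        lt_of_le_of_ne (Finset.sum_nonneg fun k _ => abs_nonneg _) (Ne.symm hLne)
      have htot : ∑ j, |u j| = (∑ k ∈ S, |u k|) + ∑ k ∈ Sᶜ, |u k| :=
        (Finset.sum_add_sum_compl S _).symm
      have habsle : ∑ j, |u j| ≤ (1 + ξ) * ∑ k ∈ S, |u k| := by
        rw [htot]; linarith
      have habsnn : 0 ≤ ∑ j, |u j| := Finset.sum_nonneg fun k _ => abs_nonneg _
      have habs2 : (∑ j, |u j|) ^ 2 ≤ (1 + ξ) ^ 2 * (∑ k ∈ S, |u k|) ^ 2 := by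
        rw [← mul_pow]
        exact pow_le_pow_left₀ habsnn habsle 2
      have hCS2 : (∑ k ∈ S, |u k|) ^ 2 ≤ (S.card : ℝ) * ∑ j, u j ^ 2 := by
        have h1 := sq_sum_le_card_mul_sum_sq (s := S) (f := fun j => |u j|)
        have h2 : ∑ j ∈ S, u j ^ 2 ≤ ∑ j, u j ^ 2 :=
          Finset.sum_le_sum_of_subset_of_nonneg (Finset.subset_univ S)
            (fun i _ _ => sq_nonneg _)
        simp only [sq_abs] at h1
        nlinarith
      have hQ := hQlow u
      have hA : lam₁ * (1 + ξ) ^ 2 * (S.card : ℝ) ≤ cstar / 2 := by nlinarith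
      have key : cstar / 2 * (∑ k ∈ S, |u k|) ^ 2
          ≤ (∑ j, ∑ k, u j * ((∑ i, X i j * X i k) / n) * u k) * (S.card : ℝ) := by
        nlinarith [mul_le_mul_of_nonneg_right hA (sq_nonneg (∑ k ∈ S, |u k|)),
          mul_le_mul_of_nonneg_left hCS2 hcstar.le,
          mul_le_mul_of_nonneg_right
            (show cstar * (∑ j, u j ^ 2) - lam₁ * (∑ j, |u j|) ^ 2
              ≤ ∑ j, ∑ k, u j * ((∑ i, X i j * X i k) / n) * u k from hQ)
            (by positivity : (0:ℝ) ≤ (S.card : ℝ)),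
          mul_le_mul_of_nonneg_right habs2 hlam₁.le]
      set Q := ∑ j, ∑ k, u j * ((∑ i, X i j * X i k) / n) * u k with hQdef
      set L := ∑ k ∈ S, |u k| with hLdef
      have hNeq : ∑ i, (∑ k, X i k * u k) ^ 2 = (n : ℝ) * Q := sefg_quad_id' n p hn X u
      have hNnn : (0:ℝ) ≤ ∑ i, (∑ k, X i k * u k) ^ 2 :=
        Finset.sum_nonneg fun i _ => sq_nonneg _
      have hQnn : 0 ≤ Q := by
        have hnpos : (0:ℝ) < n := by exact_mod_cast hn
        nlinarith
      have hrnn : 0 ≤ Real.sqrt (∑ i, (∑ k, X i k * u k) ^ 2) * Real.sqrt S.card /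
          (Real.sqrt n * L) :=
        div_nonneg (mul_nonneg (Real.sqrt_nonneg _) (Real.sqrt_nonneg _))
          (mul_nonneg (Real.sqrt_nonneg _) hL0.le)
      have hr2 : (Real.sqrt (∑ i, (∑ k, X i k * u k) ^ 2) * Real.sqrt S.card /
          (Real.sqrt n * L)) ^ 2 = Q * (S.card : ℝ) / L ^ 2 := by
        rw [div_pow, mul_pow, mul_pow, Real.sq_sqrt hNnn,
          Real.sq_sqrt (by positivity : (0:ℝ) ≤ (S.card : ℝ)),
          Real.sq_sqrt (by positivity : (0:ℝ) ≤ (n:ℝ)), hNeq]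
        rw [mul_assoc, mul_div_mul_left _ _ hn']
      have hr2ge : cstar / 2 ≤ (Real.sqrt (∑ i, (∑ k, X i k * u k) ^ 2) * Real.sqrt S.card /
          (Real.sqrt n * L)) ^ 2 := by
        rw [hr2]
        exact (le_div_iff₀ (by positivity)).mpr key
      calc Real.sqrt (cstar / 2)
          ≤ Real.sqrt ((Real.sqrt (∑ i, (∑ k, X i k * u k) ^ 2) * Real.sqrt S.card /
              (Real.sqrt n * L)) ^ 2) := Real.sqrt_le_sqrt hr2ge
        _ = _ := Real.sqrt_sq hrnn
  have hκ2 : cstar / 2 ≤ (compatFactor n p X ξ S) ^ 2 := by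
    have h1 : (Real.sqrt (cstar / 2)) ^ 2 ≤ (compatFactor n p X ξ S) ^ 2 :=
      pow_le_pow_left₀ (Real.sqrt_nonneg _) hκ 2
    rwa [Real.sq_sqrt (by positivity : (0:ℝ) ≤ cstar / 2)] at h1
  refine ⟨part1, part2, ?_⟩
  have hfinal : ξ ^ 2 * phiPlus n p X m S / (compatFactor n p X ξ S) ^ 2
      ≤ ξ ^ 2 * (cupper + cstar / 2) / (cstar / 2) := by
    refine div_le_div₀ (mul_nonneg (sq_nonneg ξ) (by linarith)) ?_ (by positivity) hκ2
    nlinarith [part2, sq_nonneg ξ]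
  refine hfinal.trans (le_of_eq ?_)
  rw [hK]
  field_simp
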